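/- Let ρ ≥ 1 and suppose that for each a ∈ X there is an orthonormal representation {ψ̃_{a,b}}_{b ∈ X} of degree ρ of the channel in a finite-dimensional complex inner product space, together with a unit vector f_a in that space. Let n ≥ 1, let x̄ ∈ X^n, let m : X × X → ℕ satisfy ∑_{a,b} m(a,b) = n and suppose each symbol a appears exactly ∑_b m(a,b) times in x̄. Let θ ∈ ℝ satisfy ∏_{a,b ∈ X} |⟨ψ̃_{a,b}, f_a⟩|^{2·m(a,b)} ≥ e^{−nθ}. Let M ≥ 2 and let c_1, …, c_M ∈ X^n be codewords each having conditional composition m from x̄, and assume M·e^{−nθ} ≥ 1. Then max over pairs j ≠ j' of ∏_{i=1}^n ⟨ψ_{c_j(i)}, ψ_{c_{j'}(i)}⟩ is at least ((M·e^{−nθ} − 1)/(M − 1))^ρ. -/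

import Mathlib

open Finset

noncomputable section

/-- Inner product of "product vectors" in a Euclidean space over a pi type. -/
lemma aux_inner_pi_prod {ι : Type*} [Fintype ι] [DecidableEq ι] {κ : ι → Type*}
    [∀ i, Fintype (κ i)] (g h : ∀ i, EuclideanSpace ℂ (κ i))
    (G H : EuclideanSpace ℂ (∀ i, κ i))
    (hG : ∀ t, G t = ∏ i, g i (t i)) (hH : ∀ t, H t = ∏ i, h i (t i)) :
    (inner ℂ G H : ℂ) = ∏ i, (inner ℂ (g i) (h i) : ℂ) := by
  simp only [PiLp.inner_apply, RCLike.inner_apply', hG, hH]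
  have key : ∀ t : (∀ i, κ i), (starRingEnd ℂ) (∏ i, g i (t i)) * ∏ i, h i (t i)
      = ∏ i, (starRingEnd ℂ) (g i (t i)) * h i (t i) := by
    intro t; rw [map_prod, Finset.prod_mul_distrib]
  simp only [key]
  rw [Finset.prod_univ_sum (fun _ => Finset.univ)
    (fun i k => (starRingEnd ℂ) (g i k) * h i k), Fintype.piFinset_univ]

lemma aux_sum_ident {M : ℕ} (σ : ℝ) (b : Fin M → ℝ) :
    ∑ j, ∑ k, (σ * (b j * b k) + (if j = k then (1 - σ) * b j ^ 2 else 0))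
      = σ * (∑ j, b j) ^ 2 + (1 - σ) * ∑ j, b j ^ 2 := by
  have h2 : σ * (∑ j, b j) ^ 2 = ∑ j, ∑ k, σ * (b j * b k) := by
    rw [sq, Finset.sum_mul_sum, Finset.mul_sum]
    exact Finset.sum_congr rfl fun j _ => Finset.mul_sum _ _ _
  have h3 : (1 - σ) * ∑ j, b j ^ 2 = ∑ j, (1 - σ) * b j ^ 2 := Finset.mul_sum _ _ _
  rw [h2, h3, ← Finset.sum_add_distrib]
  refine Finset.sum_congr rfl fun j _ => ?_
  rw [Finset.sum_add_distrib]
  congr 1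
  simp

lemma aux_norm_one {V : Type*} [NormedAddCommGroup V] [InnerProductSpace ℂ V]
    {x : V} (h : (inner ℂ x x : ℂ) = 1) : ‖x‖ = 1 := by
  have h3 : (‖x‖ : ℝ) ^ 2 = 1 := by
    have h2 := norm_sq_eq_re_inner (𝕜 := ℂ) x
    rw [h] at h2
    simpa using h2
  nlinarith [norm_nonneg x]

lemma aux_prod_comp {n : ℕ} {X : Type*} [Fintype X] [DecidableEq X]
    (xbar x : Fin n → X) (mm : X × X → ℕ)
    (hx : ∀ a b, (Finset.univ.filter fun i => xbar i = a ∧ x i = b).card = mm (a, b))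
    (g : X → X → ℝ) :
    ∏ i, g (xbar i) (x i) = ∏ p : X × X, g p.1 p.2 ^ mm p := by
  classical
  rw [← Finset.prod_fiberwise Finset.univ (fun i => (xbar i, x i))
      (fun i => g (xbar i) (x i))]
  refine Finset.prod_congr rfl fun p _ => ?_
  have h1 : ∀ i ∈ Finset.univ.filter (fun i => (xbar i, x i) = p),
      g (xbar i) (x i) = g p.1 p.2 := by
    intro i hi
    simp only [Finset.mem_filter, Prod.ext_iff] at hi
    rw [hi.2.1, hi.2.2]
  rw [Finset.prod_congr rfl h1, Finset.prod_const]
  congr 1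
  rw [← hx p.1 p.2]
  congr 1
  ext i
  simp [Prod.ext_iff]

/-- The umbrella (Gram matrix) bound. -/
lemma aux_gram {V : Type*} [NormedAddCommGroup V] [InnerProductSpace ℂ V]
    {M : ℕ} (v : Fin M → V) (F : V)
    (hv : ∀ j, ‖v j‖ = 1) (hF : ‖F‖ = 1)
    (σ : ℝ) (hσ0 : 0 ≤ σ)
    (hσ : ∀ j j', j ≠ j' → ‖(inner ℂ (v j) (v j') : ℂ)‖ ≤ σ)
    (hS1 : 1 ≤ ∑ j, ‖(inner ℂ (v j) F : ℂ)‖ ^ 2) :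
    ∑ j, ‖(inner ℂ (v j) F : ℂ)‖ ^ 2 ≤ 1 + ((M : ℝ) - 1) * σ := by
  classical
  set cc : Fin M → ℂ := fun j => inner ℂ (v j) F with hcc
  set S : ℝ := ∑ j, ‖cc j‖ ^ 2 with hSdef
  set u : V := ∑ j, cc j • v j with hu
  -- ⟪u, F⟫ = S
  have h1 : (inner ℂ u F : ℂ) = (S : ℂ) := by
    rw [hu, sum_inner]
    simp only [inner_smul_left]
    change ∑ x, (starRingEnd ℂ) (cc x) * cc x = _
    simp only [RCLike.conj_mul]
    push_cast [hSdef]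
    norm_num
  have hSu : S ≤ ‖u‖ := by
    have := norm_inner_le_norm (𝕜 := ℂ) u F
    rw [h1, hF, mul_one] at this
    have hSnn : (0:ℝ) ≤ S := Finset.sum_nonneg fun j _ => sq_nonneg _
    calc S = ‖(S : ℂ)‖ := by
          rw [Complex.norm_real, Real.norm_eq_abs, abs_of_nonneg hSnn]
      _ ≤ ‖u‖ := this
  -- expand ‖u‖²
  have hexp : (inner ℂ u u : ℂ)
      = ∑ j, ∑ k, (starRingEnd ℂ) (cc j) * (cc k * inner ℂ (v j) (v k)) := by
    rw [hu, sum_inner]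
    refine Finset.sum_congr rfl fun j _ => ?_
    rw [inner_smul_left, inner_sum]
    rw [Finset.mul_sum]
    refine Finset.sum_congr rfl fun k _ => ?_
    rw [inner_smul_right]
  have hu2 : ‖u‖ ^ 2 ≤ ∑ j, ∑ k, ‖cc j‖ * (‖cc k‖ * ‖(inner ℂ (v j) (v k) : ℂ)‖) := by
    calc ‖u‖ ^ 2 = RCLike.re (inner ℂ u u : ℂ) := norm_sq_eq_re_inner (𝕜 := ℂ) u
      _ ≤ ‖(inner ℂ u u : ℂ)‖ := RCLike.re_le_norm _
      _ ≤ ∑ j, ∑ k, ‖cc j‖ * (‖cc k‖ * ‖(inner ℂ (v j) (v k) : ℂ)‖) := by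
          rw [hexp]
          refine (norm_sum_le _ _).trans (Finset.sum_le_sum fun j _ => ?_)
          refine (norm_sum_le _ _).trans (Finset.sum_le_sum fun k _ => ?_)
          rw [norm_mul, norm_mul, RCLike.norm_conj]
  -- termwise bound
  have hterm : ∀ j k, ‖cc j‖ * (‖cc k‖ * ‖(inner ℂ (v j) (v k) : ℂ)‖)
      ≤ σ * (‖cc j‖ * ‖cc k‖) + (if j = k then (1 - σ) * ‖cc j‖ ^ 2 else 0) := by
    intro j k
    by_cases h : j = k
    · subst h
      have : ‖(inner ℂ (v j) (v j) : ℂ)‖ = 1 := by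
        rw [inner_self_eq_norm_sq_to_K, hv]
        norm_num
      rw [this, if_pos rfl]
      ring_nf
      nlinarith [sq_nonneg (‖cc j‖)]
    · rw [if_neg h, add_zero]
      have h2 := hσ j k h
      have := mul_le_mul_of_nonneg_left h2 (mul_nonneg (norm_nonneg (cc j)) (norm_nonneg (cc k)))
      calc ‖cc j‖ * (‖cc k‖ * ‖(inner ℂ (v j) (v k) : ℂ)‖)
          = ‖cc j‖ * ‖cc k‖ * ‖(inner ℂ (v j) (v k) : ℂ)‖ := by ring
        _ ≤ ‖cc j‖ * ‖cc k‖ * σ := by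
            exact mul_le_mul_of_nonneg_left h2 (mul_nonneg (norm_nonneg _) (norm_nonneg _))
        _ = σ * (‖cc j‖ * ‖cc k‖) := by ring
  have hsum : ∑ j, ∑ k, ‖cc j‖ * (‖cc k‖ * ‖(inner ℂ (v j) (v k) : ℂ)‖)
      ≤ σ * (∑ j, ‖cc j‖) ^ 2 + (1 - σ) * S := by
    calc ∑ j, ∑ k, ‖cc j‖ * (‖cc k‖ * ‖(inner ℂ (v j) (v k) : ℂ)‖)
        ≤ ∑ j, ∑ k, (σ * (‖cc j‖ * ‖cc k‖)
            + (if j = k then (1 - σ) * ‖cc j‖ ^ 2 else 0)) :=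
          Finset.sum_le_sum fun j _ => Finset.sum_le_sum fun k _ => hterm j k
      _ = σ * (∑ j, ‖cc j‖) ^ 2 + (1 - σ) * S := by
          rw [hSdef]
          exact aux_sum_ident σ (fun j => ‖cc j‖)
  have hCS : (∑ j, ‖cc j‖) ^ 2 ≤ (M : ℝ) * S := by
    have := sq_sum_le_card_mul_sum_sq (s := (Finset.univ : Finset (Fin M)))
      (f := fun j => ‖cc j‖)
    simpa [hSdef] using this
  -- put together: S² ≤ σ M S + (1-σ) S
  have hkey : S ^ 2 ≤ σ * ((M : ℝ) * S) + (1 - σ) * S := by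
    have h5 : S ^ 2 ≤ ‖u‖ ^ 2 := by
      have hSnn : (0:ℝ) ≤ S := Finset.sum_nonneg fun j _ => sq_nonneg _
      exact pow_le_pow_left₀ hSnn hSu 2
    calc S ^ 2 ≤ ‖u‖ ^ 2 := h5
      _ ≤ ∑ j, ∑ k, ‖cc j‖ * (‖cc k‖ * ‖(inner ℂ (v j) (v k) : ℂ)‖) := hu2
      _ ≤ σ * (∑ j, ‖cc j‖) ^ 2 + (1 - σ) * S := hsum
      _ ≤ σ * ((M : ℝ) * S) + (1 - σ) * S := by
          have := mul_le_mul_of_nonneg_left hCS hσ0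
          linarith
  have hS1' : 1 ≤ S := hS1
  show S ≤ 1 + ((M : ℝ) - 1) * σ
  nlinarith [hkey, hS1', hσ0]

set_option maxHeartbeats 1600000 in
theorem stmt5 {X Y : Type*} [Fintype X] [Fintype Y] [DecidableEq X]
    {E : X → Type*} [∀ a, NormedAddCommGroup (E a)] [∀ a, InnerProductSpace ℂ (E a)]
    [∀ a, FiniteDimensional ℂ (E a)]
    (W : X → Y → ℝ) (hW0 : ∀ x y, 0 ≤ W x y) (hW1 : ∀ x, ∑ y, W x y = 1)
    (ρ : ℝ) (hρ : 1 ≤ ρ)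
    (ψt : ∀ a : X, X → E a) (hψt : ∀ a b, ‖ψt a b‖ = 1)
    (hrep : ∀ a b b', b ≠ b' →
      ‖(inner ℂ (ψt a b) (ψt a b') : ℂ)‖ ≤ (∑ y, Real.sqrt (W b y * W b' y)) ^ (1 / ρ))
    (f : ∀ a : X, E a) (hf : ∀ a, ‖f a‖ = 1)
    (n : ℕ) (hn : 1 ≤ n) (xbar : Fin n → X) (mm : X × X → ℕ)
    (hmm : ∑ p : X × X, mm p = n)
    (hxbar : ∀ a, (Finset.univ.filter fun i => xbar i = a).card = ∑ b, mm (a, b))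
    (θ : ℝ)
    (hθ : Real.exp (-(n * θ)) ≤ ∏ a, ∏ b, ‖(inner ℂ (ψt a b) (f a) : ℂ)‖ ^ (2 * mm (a, b)))
    (M : ℕ) (hM : 2 ≤ M)
    (c : Fin M → Fin n → X)
    (hc : ∀ j a b, (Finset.univ.filter fun i => xbar i = a ∧ c j i = b).card = mm (a, b))
    (hMe : 1 ≤ (M : ℝ) * Real.exp (-(n * θ))) :
    ∃ j j', j ≠ j' ∧
      (((M : ℝ) * Real.exp (-(n * θ)) - 1) / ((M : ℝ) - 1)) ^ ρ
        ≤ ∏ i, ∑ y, Real.sqrt (W (c j i) y * W (c j' i) y) := by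
  classical
  set β : X → X → ℝ := fun b b' => ∑ y, Real.sqrt (W b y * W b' y) with hβ
  have hβ0 : ∀ b b', 0 ≤ β b b' := fun b b' =>
    Finset.sum_nonneg fun y _ => Real.sqrt_nonneg _
  have hβdiag : ∀ b, β b b = 1 := by
    intro b
    rw [hβ]
    calc ∑ y, Real.sqrt (W b y * W b y) = ∑ y, W b y :=
        Finset.sum_congr rfl fun y _ => Real.sqrt_mul_self (hW0 b y)
      _ = 1 := hW1 b
  -- the ambient Euclidean space
  set d : X → ℕ := fun a => Module.finrank ℂ (E a) with hd
  set bas : ∀ a, OrthonormalBasis (Fin (d a)) ℂ (E a) :=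
    fun a => stdOrthonormalBasis ℂ (E a) with hbas
  set T := ∀ i : Fin n, Fin (d (xbar i)) with hT
  have hinner : ∀ (G H : EuclideanSpace ℂ T) (p q : ∀ i : Fin n, E (xbar i)),
      (∀ t, G t = ∏ i, (bas (xbar i)).repr (p i) (t i)) →
      (∀ t, H t = ∏ i, (bas (xbar i)).repr (q i) (t i)) →
      (inner ℂ G H : ℂ) = ∏ i, (inner ℂ (p i) (q i) : ℂ) := by
    intro G H p q hG hH
    rw [aux_inner_pi_prod (fun i => (bas (xbar i)).repr (p i))
      (fun i => (bas (xbar i)).repr (q i)) G H hG hH]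
    exact Finset.prod_congr rfl fun i _ =>
      (bas (xbar i)).repr.inner_map_map (p i) (q i)
  set vv : Fin M → EuclideanSpace ℂ T :=
    fun j => WithLp.toLp 2 fun t => ∏ i, (bas (xbar i)).repr (ψt (xbar i) (c j i)) (t i) with hvv
  set F : EuclideanSpace ℂ T :=
    WithLp.toLp 2 fun t => ∏ i, (bas (xbar i)).repr (f (xbar i)) (t i) with hF
  have hinner_vF : ∀ j, (inner ℂ (vv j) F : ℂ)
      = ∏ i, (inner ℂ (ψt (xbar i) (c j i)) (f (xbar i)) : ℂ) :=
    fun j => hinner (vv j) F (fun i => ψt (xbar i) (c j i)) (fun i => f (xbar i))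
      (fun t => rfl) (fun t => rfl)
  have hinner_vv : ∀ j j', (inner ℂ (vv j) (vv j') : ℂ)
      = ∏ i, (inner ℂ (ψt (xbar i) (c j i)) (ψt (xbar i) (c j' i)) : ℂ) :=
    fun j j' => hinner (vv j) (vv j') (fun i => ψt (xbar i) (c j i))
      (fun i => ψt (xbar i) (c j' i)) (fun t => rfl) (fun t => rfl)
  have hinner_FF : (inner ℂ F F : ℂ) = ∏ i, (inner ℂ (f (xbar i)) (f (xbar i)) : ℂ) :=
    hinner F F (fun i => f (xbar i)) (fun i => f (xbar i)) (fun t => rfl) (fun t => rfl)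
  have hself_one : ∀ (a : X) (x : E a), ‖x‖ = 1 → (inner ℂ x x : ℂ) = 1 := by
    intro a x hx
    rw [inner_self_eq_norm_sq_to_K, hx]
    norm_num
  have hvnorm : ∀ j, ‖vv j‖ = 1 := by
    intro j
    refine aux_norm_one ?_
    rw [hinner_vv j j]
    exact Finset.prod_eq_one fun i _ => hself_one _ _ (hψt _ _)
  have hFnorm : ‖F‖ = 1 := by
    refine aux_norm_one ?_
    rw [hinner_FF]
    exact Finset.prod_eq_one fun i _ => hself_one _ _ (hf _)
  -- lower bound on each |⟪v_j, F⟫|²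
  have hSj : ∀ j, Real.exp (-(n * θ)) ≤ ‖(inner ℂ (vv j) F : ℂ)‖ ^ 2 := by
    intro j
    have h2 : ‖(inner ℂ (vv j) F : ℂ)‖ ^ 2
        = ∏ i, ‖(inner ℂ (ψt (xbar i) (c j i)) (f (xbar i)) : ℂ)‖ ^ 2 := by
      rw [hinner_vF j, norm_prod, ← Finset.prod_pow]
    rw [h2, aux_prod_comp xbar (c j) mm (hc j)
      (fun a b => ‖(inner ℂ (ψt a b) (f a) : ℂ)‖ ^ 2)]
    calc Real.exp (-(n * θ))
        ≤ ∏ a, ∏ b, ‖(inner ℂ (ψt a b) (f a) : ℂ)‖ ^ (2 * mm (a, b)) := hθ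
      _ = ∏ p : X × X, (‖(inner ℂ (ψt p.1 p.2) (f p.1) : ℂ)‖ ^ 2) ^ mm p := by
          rw [Fintype.prod_prod_type]
          exact Finset.prod_congr rfl fun a _ => Finset.prod_congr rfl fun b _ =>
            pow_mul _ 2 (mm (a, b))
  have hS1 : (M : ℝ) * Real.exp (-(n * θ)) ≤ ∑ j, ‖(inner ℂ (vv j) F : ℂ)‖ ^ 2 := by
    calc (M : ℝ) * Real.exp (-(n * θ))
        = ∑ _j : Fin M, Real.exp (-(n * θ)) := by
          rw [Finset.sum_const, Finset.card_univ, Fintype.card_fin, nsmul_eq_mul]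
      _ ≤ ∑ j, ‖(inner ℂ (vv j) F : ℂ)‖ ^ 2 := Finset.sum_le_sum fun j _ => hSj j
  -- the maximal off-diagonal inner ℂ product
  set P := (Finset.univ : Finset (Fin M × Fin M)).filter (fun p => p.1 ≠ p.2) with hP
  have hPne : P.Nonempty := by
    refine ⟨(⟨0, by omega⟩, ⟨1, by omega⟩), ?_⟩
    simp [hP, Fin.ext_iff]
  set σ : ℝ := P.sup' hPne (fun p => ‖(inner ℂ (vv p.1) (vv p.2) : ℂ)‖) with hσdef
  obtain ⟨p, hpmem, hpeq⟩ := P.exists_mem_eq_sup' hPne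
    (fun p => ‖(inner ℂ (vv p.1) (vv p.2) : ℂ)‖)
  have hpne : p.1 ≠ p.2 := (Finset.mem_filter.mp hpmem).2
  have hσ0 : 0 ≤ σ := by rw [hσdef, hpeq]; positivity
  have hσub : ∀ j j', j ≠ j' → ‖(inner ℂ (vv j) (vv j') : ℂ)‖ ≤ σ := by
    intro j j' h
    rw [hσdef]
    have hmem : (j, j') ∈ P := by rw [hP]; simp [h]
    exact Finset.le_sup' (fun p : Fin M × Fin M => ‖(inner ℂ (vv p.1) (vv p.2) : ℂ)‖) hmem
  have hgram := aux_gram vv F hvnorm hFnorm σ hσ0 hσub (le_trans hMe hS1)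
  have hM1 : (0:ℝ) < (M : ℝ) - 1 := by
    have : (2:ℝ) ≤ (M : ℝ) := by exact_mod_cast hM
    linarith
  have hbase : ((M : ℝ) * Real.exp (-(n * θ)) - 1) / ((M : ℝ) - 1) ≤ σ := by
    rw [div_le_iff₀ hM1]
    have := le_trans hS1 hgram
    linarith
  have hbase0 : 0 ≤ ((M : ℝ) * Real.exp (-(n * θ)) - 1) / ((M : ℝ) - 1) :=
    div_nonneg (by linarith) (le_of_lt hM1)
  -- the pairwise bound
  have hpair : ‖(inner ℂ (vv p.1) (vv p.2) : ℂ)‖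
      ≤ (∏ i, β (c p.1 i) (c p.2 i)) ^ (1 / ρ) := by
    rw [hinner_vv, norm_prod]
    have hprod0 : 0 ≤ ∏ i, β (c p.1 i) (c p.2 i) :=
      Finset.prod_nonneg fun i _ => hβ0 _ _
    calc ∏ i, ‖(inner ℂ (ψt (xbar i) (c p.1 i)) (ψt (xbar i) (c p.2 i)) : ℂ)‖
        ≤ ∏ i, (β (c p.1 i) (c p.2 i)) ^ (1 / ρ) := by
          refine Finset.prod_le_prod (fun i _ => norm_nonneg _) fun i _ => ?_
          by_cases h : c p.1 i = c p.2 i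
          · rw [h, hself_one _ _ (hψt _ _), hβdiag]
            simp [Real.one_rpow]
          · exact hrep (xbar i) _ _ h
      _ = (∏ i, β (c p.1 i) (c p.2 i)) ^ (1 / ρ) :=
          Real.finset_prod_rpow _ _ (fun i _ => hβ0 _ _) _
  have hρ0 : (0:ℝ) < ρ := lt_of_lt_of_le one_pos hρ
  have hprod0 : 0 ≤ ∏ i, β (c p.1 i) (c p.2 i) :=
    Finset.prod_nonneg fun i _ => hβ0 _ _
  refine ⟨p.1, p.2, hpne, ?_⟩
  have h1 : ((M : ℝ) * Real.exp (-(n * θ)) - 1) / ((M : ℝ) - 1)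
      ≤ (∏ i, β (c p.1 i) (c p.2 i)) ^ (1 / ρ) := by
    calc ((M : ℝ) * Real.exp (-(n * θ)) - 1) / ((M : ℝ) - 1) ≤ σ := hbase
      _ = ‖(inner ℂ (vv p.1) (vv p.2) : ℂ)‖ := by rw [hσdef, hpeq]
      _ ≤ _ := hpair
  have h2 := Real.rpow_le_rpow hbase0 h1 (le_of_lt hρ0)
  rw [← Real.rpow_mul hprod0, one_div_mul_cancel (ne_of_gt hρ0), Real.rpow_one] at h2
  exact h2
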